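/- Let E, H, K, C be nonempty finite types, let Φ : Matrix (H × C) (H × C) ℂ →ₗ[ℂ] Matrix (K × C) (K × C) ℂ be a linear map, and let G : Matrix (E × (H × C)) (E × (H × C)) ℂ →ₗ[ℂ] Matrix (E × (K × C)) (E × (K × C)) ℂ be a linear map satisfying G (x ⊗ₖ y) = x ⊗ₖ Φ y for all x : Matrix E E ℂ and y : Matrix (H × C) (H × C) ℂ. Let ρ : Matrix (E × H) (E × H) ℂ and τ : Matrix C C ℂ, and let ρ̃ be the reindexing of ρ ⊗ₖ τ along the associativity equivalence (E × H) × C ≃ E × (H × C). Then for all c c' : C, ∑ over e : E and k : K of (G ρ̃) (e, (k, c)) (e, (k, c')) equals ∑ over k : K of (Φ ((Tr_E ρ) ⊗ₖ τ)) (k, c) (k, c'), where Tr_E ρ : Matrix H H ℂ is given by (Tr_E ρ) i j = ∑ e, ρ (e, i) (e, j). That is, the chronology-violating system's fixed-point equation in the presence of an untouched ancilla E depends only on the reduced state of ρ on H. -/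
import Mathlib


open scoped Kronecker

/-- Core of the strength axiom for Deutsch's D-CTC super-operator: the
fixed-point equation of the chronology-violating system, in the presence of an
untouched ancilla `E`, depends only on the reduced state of `ρ` on `H`. -/
theorem dctc_strength_fixed_point_reduced {E H K C : Type*}
    [Fintype E] [Fintype H] [Fintype K] [Fintype C]
    [Nonempty E] [Nonempty H] [Nonempty K] [Nonempty C]
    (Φ : Matrix (H × C) (H × C) ℂ →ₗ[ℂ] Matrix (K × C) (K × C) ℂ)
    (G : Matrix (E × (H × C)) (E × (H × C)) ℂ →ₗ[ℂ] Matrix (E × (K × C)) (E × (K × C)) ℂ)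
    (hG : ∀ (x : Matrix E E ℂ) (y : Matrix (H × C) (H × C) ℂ), G (x ⊗ₖ y) = x ⊗ₖ Φ y)
    (ρ : Matrix (E × H) (E × H) ℂ) (τ : Matrix C C ℂ) :
    ∀ c c' : C,
      ∑ e : E, ∑ k : K,
          (G ((Matrix.reindex (Equiv.prodAssoc E H C) (Equiv.prodAssoc E H C)) (ρ ⊗ₖ τ)))
            (e, (k, c)) (e, (k, c')) =
        ∑ k : K,
          (Φ ((Matrix.of fun i j : H => ∑ e : E, ρ (e, i) (e, j)) ⊗ₖ τ)) (k, c) (k, c') := by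
  classical
  intro c c'
  set B : E → E → Matrix H H ℂ := fun e e' => Matrix.of fun h h' : H => ρ (e, h) (e', h') with hB
  have hdec : (Matrix.reindex (Equiv.prodAssoc E H C) (Equiv.prodAssoc E H C)) (ρ ⊗ₖ τ)
      = ∑ e : E, ∑ e' : E, (Matrix.single e e' (1:ℂ)) ⊗ₖ (B e e' ⊗ₖ τ) := by
    ext ⟨a, h, d⟩ ⟨a', h', d'⟩
    simp only [Matrix.reindex_apply, Matrix.submatrix_apply, Equiv.prodAssoc_symm_apply,
      Matrix.kroneckerMap_apply, Matrix.sum_apply, Matrix.single, Matrix.of_apply, hB]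
    rw [Finset.sum_eq_single a]
    · rw [Finset.sum_eq_single a']
      · simp
      · intro b _ hb
        simp [hb]
      · simp
    · intro b _ hb
      apply Finset.sum_eq_zero
      intro b' _
      simp [hb]
    · simp
  rw [hdec, map_sum]
  simp only [map_sum, hG]
  have key : ∀ (e : E) (k : K),
      (∑ e1 : E, ∑ e2 : E, (Matrix.single e1 e2 (1:ℂ)) ⊗ₖ Φ (B e1 e2 ⊗ₖ τ))
        (e, (k, c)) (e, (k, c')) = Φ (B e e ⊗ₖ τ) (k, c) (k, c') := by
    intro e k
    simp only [Matrix.sum_apply, Matrix.kroneckerMap_apply, Matrix.single,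
      Matrix.of_apply]
    rw [Finset.sum_eq_single e]
    · rw [Finset.sum_eq_single e]
      · simp
      · intro b _ hb
        simp [hb]
      · simp
    · intro b _ hb
      apply Finset.sum_eq_zero
      intro b' _
      simp [hb]
    · simp
  simp only [key]
  have hrhs : (Matrix.of fun i j : H => ∑ e : E, ρ (e, i) (e, j)) = ∑ e : E, B e e := by
    ext i j; simp [Matrix.sum_apply, hB]
  have hkron : ((∑ e : E, B e e) ⊗ₖ τ) = ∑ e : E, (B e e ⊗ₖ τ) := by
    ext ⟨i, d⟩ ⟨j, d'⟩
    simp [Matrix.sum_apply, Matrix.kroneckerMap_apply, Finset.sum_mul]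
  rw [hrhs, hkron, map_sum]
  simp only [Matrix.sum_apply]
  rw [Finset.sum_comm]
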